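/- Let V ∈ M_T ∪ {ε} and let b ∈ [0..σ] be a character with |P_T(Vb)| > 1. Then the shortest right-maximal extension Y of Vb exists, P_T(Vb) = P_T(Y), and Y is a maximal repeat of T if and only if Vb is left-maximal in T. (This gives the bijection between the suffix-tree edges of T leaving maximal-repeat nodes and the Weiner links of the suffix tree of the reverse of T departing from maximal-repeat nodes: such an edge leads to a maximal-repeat node exactly when the corresponding Weiner link is explicit.) -/

import Mathlib

/-! Basic definitions: strings are lists of naturals; the separator `#` is `0`;
the alphabet is `Σ = [1..σ]`. Occurrences are taken in the circular version of `T`. -/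

noncomputable section
open Classical

/-- `T` is a string over the alphabet `[1..σ]` followed by the separator `# = 0`
(so `#` occurs in `T` exactly once, at the last position). -/
def Wellformed (σ : ℕ) (T : List ℕ) : Prop :=
  ∃ S : List ℕ, T = S ++ [0] ∧ ∀ c ∈ S, 1 ≤ c ∧ c ≤ σ

/-- The rotation of `T` starting at position `i`. -/
def rot (T : List ℕ) (i : ℕ) : List ℕ := T.drop i ++ T.take i

/-- `W` occurs at position `i` of the circular version of `T`. -/
def CircOccAt (T W : List ℕ) (i : ℕ) : Prop :=
  ∀ j < W.length, W.getD j 0 = T.getD ((i + j) % T.length) 0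

/-- `𝒫_T(W)`: the set of starting positions of occurrences of `W` in the circular
version of `T`. -/
def Pset (T W : List ℕ) : Finset ℕ :=
  (Finset.range T.length).filter (fun i => CircOccAt T W i)

/-- `W` occurs in the circular version of `T`. -/
def OccursCirc (T W : List ℕ) : Prop := (Pset T W).Nonempty

/-- `Σ^ℓ_T(W)`: the set of characters `a` such that `aW` occurs in circular `T`. -/
def SigmaL (T W : List ℕ) : Finset ℕ :=
  T.toFinset.filter (fun a => OccursCirc T (a :: W))

/-- `Σ^r_T(W)`: the set of characters `b` such that `Wb` occurs in circular `T`. -/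
def SigmaR (T W : List ℕ) : Finset ℕ :=
  T.toFinset.filter (fun b => OccursCirc T (W ++ [b]))

/-- `W` is left-maximal in `T`. -/
def LeftMaximal (T W : List ℕ) : Prop := 1 < (SigmaL T W).card

/-- `W` is right-maximal in `T`. -/
def RightMaximal (T W : List ℕ) : Prop := 1 < (SigmaR T W).card

/-- The (finite) collection of substrings of the circular version of `T`. -/
def circSubstrings (T : List ℕ) : Finset (List ℕ) :=
  ((Finset.range T.length) ×ˢ (Finset.range (T.length + 1))).image
    (fun p => (rot T p.1).take p.2)

/-- `ℳ_T`: the set of nonempty maximal repeats of `T`, i.e. repeats that are both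
left-maximal and right-maximal.  (Every maximal repeat occurs in circular `T` and has
length at most `|T|`, so it belongs to `circSubstrings T`.) -/
def MaxRepeats (T : List ℕ) : Finset (List ℕ) :=
  (circSubstrings T).filter
    (fun W => W ≠ [] ∧ 1 < (Pset T W).card ∧ LeftMaximal T W ∧ RightMaximal T W)

/-- Strict lexicographic comparison of strings (a proper prefix is smaller). -/
def lexLt : List ℕ → List ℕ → Bool
  | [], [] => false
  | [], _ :: _ => true
  | _ :: _, [] => false
  | a :: A, b :: B => decide (a < b) || (a == b && lexLt A B)

/-- Non-strict lexicographic comparison. -/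
def lexLe (A B : List ℕ) : Bool := !(lexLt B A)

/-- The Burrows–Wheeler transform of `T`: the `i`-th character of `BWT T` is the last
character of the lexicographically `i`-th rotation of `T`. -/
def BWT (T : List ℕ) : List ℕ :=
  (((List.range T.length).map (rot T)).mergeSort lexLe).map (fun R => R.getLast!)

/-- The number of runs of a string, i.e. the number of maximal intervals on which all
characters are equal. -/
def numRuns : List ℕ → ℕ
  | [] => 0
  | [_] => 1
  | a :: b :: l => (if a = b then 0 else 1) + numRuns (b :: l)


noncomputable section
open Classical

/-- `ℳ^r_T`: the set of rightmost maximal repeats of `T`: maximal repeats `W` such that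
no string `WV` with `V` nonempty is left-maximal in `T`. -/
def RightmostMaxRepeats (T : List ℕ) : Finset (List ℕ) :=
  (MaxRepeats T).filter (fun W => ∀ V : List ℕ, V ≠ [] → ¬ LeftMaximal T (W ++ V))

/-- `Y` is the shortest right-maximal extension of `X` in `T`: the shortest
right-maximal string of `T` having `X` as a prefix. -/
def ShortestRightMaxExt (T X Y : List ℕ) : Prop :=
  X <+: Y ∧ RightMaximal T Y ∧
    ∀ Z : List ℕ, X <+: Z → RightMaximal T Z → Y.length ≤ Z.length

/-- `ℱ^r_T`: pairs `(V, b)` with `V ∈ ℳ_T ∪ {ε}` and `b ∈ Σ^r_T(V)` such that either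
`Vb` occurs exactly once in circular `T`, or the shortest right-maximal extension of
`Vb` is not a maximal repeat of `T`.  These pairs correspond to the suffix-tree edges
of `T` from maximal-repeat nodes to non-maximal-repeat nodes. -/
def Fr (T : List ℕ) : Finset (List ℕ × ℕ) :=
  ((insert ([] : List ℕ) (MaxRepeats T)) ×ˢ T.toFinset).filter
    (fun p => p.2 ∈ SigmaR T p.1 ∧
      ((Pset T (p.1 ++ [p.2])).card = 1 ∨
        ∀ Y : List ℕ, ShortestRightMaxExt T (p.1 ++ [p.2]) Y → Y ∉ MaxRepeats T))

/-- `e_T`: the number of right extensions of maximal repeats of `T`, i.e. the number of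
pairs `(V, b)` with `V ∈ ℳ_T ∪ {ε}` and `b ∈ Σ^r_T(V)`.  This equals the number of
arcs of the CDAWG of `T`. -/
def eCount (T : List ℕ) : ℕ :=
  ∑ V ∈ insert ([] : List ℕ) (MaxRepeats T), (SigmaR T V).card

/-- The next LZ77 factor, to be placed at position `k` of `T`, may be `F` if `F` is a
single character (every single character of `T` has a source among the `σ+1` distinct
characters virtually preceding `T`), or if `F` has an occurrence in `T` starting at a
position `j` strictly before `k`. -/
def LZsource (T : List ℕ) (k : ℕ) (F : List ℕ) : Prop :=
  F.length = 1 ∨ ∃ j, j < k ∧ F <+: T.drop j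

/-- `fs` is the LZ77 factorization of `T` (greedy: each factor is the longest prefix of
the remaining suffix admitting a source). -/
def IsLZ77 (T : List ℕ) (fs : List (List ℕ)) : Prop :=
  fs.flatten = T ∧ (∀ F ∈ fs, F ≠ []) ∧
    ∀ i, (h : i < fs.length) →
      LZsource T ((fs.take i).flatten).length (fs.get ⟨i, h⟩) ∧
      ∀ F' : List ℕ, F' <+: T.drop ((fs.take i).flatten).length →
        (fs.get ⟨i, h⟩).length < F'.length →
          ¬ LZsource T ((fs.take i).flatten).length F'

/-- `N_T(X)`: the number of rotations of `T` lexicographically smaller than `X`. -/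
def Nrank (T X : List ℕ) : ℕ :=
  ((List.range T.length).filter (fun i => lexLt (rot T i) X)).length

/-- The string `a b a² b a³ b ⋯ aˣ b #`. -/
def Tx (a b x : ℕ) : List ℕ :=
  (((List.range x).map (fun i => List.replicate (i + 1) a ++ [b])).flatten) ++ [0]

end


noncomputable section
open Classical

namespace SRME

/-- The circular substring of `T` of length `ℓ` starting at position `i`. -/
def csub (T : List ℕ) (i ℓ : ℕ) : List ℕ :=
  (List.range ℓ).map (fun j => T.getD ((i + j) % T.length) 0)

lemma csub_length (T : List ℕ) (i ℓ : ℕ) : (csub T i ℓ).length = ℓ := by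
  simp [csub]

lemma csub_getElem (T : List ℕ) (i ℓ j : ℕ) (hj : j < ℓ) :
    (csub T i ℓ)[j]'(by simpa [csub_length] using hj) = T.getD ((i + j) % T.length) 0 := by
  simp [csub]

lemma circOccAt_iff (T W : List ℕ) (i : ℕ) :
    CircOccAt T W i ↔ W = csub T i W.length := by
  constructor
  · intro h
    apply List.ext_getElem (by simp [csub_length])
    intro j h1 h2
    have hW := h j h1
    rw [List.getD_eq_getElem _ _ h1] at hW
    rw [hW, csub_getElem T i _ j h1]
  · intro h j hj
    conv_lhs => rw [h]
    rw [List.getD_eq_getElem _ _ (by simpa [csub_length] using hj)]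
    exact csub_getElem T i _ j hj

lemma csub_take (T : List ℕ) (i : ℕ) {a b : ℕ} (h : a ≤ b) :
    (csub T i b).take a = csub T i a := by
  simp [csub, ← List.map_take, List.take_range, Nat.min_eq_left h]

lemma csub_prefix (T : List ℕ) (i : ℕ) {a b : ℕ} (h : a ≤ b) :
    csub T i a <+: csub T i b := by
  rw [← csub_take T i h]; exact List.take_prefix _ _

lemma csub_succ (T : List ℕ) (i ℓ : ℕ) :
    csub T i (ℓ + 1) = csub T i ℓ ++ [T.getD ((i + ℓ) % T.length) 0] := by
  simp [csub, List.range_succ]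

lemma csub_getD (T : List ℕ) (i ℓ j : ℕ) (hj : j < ℓ) :
    (csub T i ℓ).getD j 0 = T.getD ((i + j) % T.length) 0 := by
  rw [List.getD_eq_getElem _ _ (by simpa [csub_length] using hj)]
  exact csub_getElem T i ℓ j hj

lemma circOccAt_of_prefix {T W Z : List ℕ} {i : ℕ} (h : W <+: Z)
    (hZ : CircOccAt T Z i) : CircOccAt T W i := by
  intro j hj
  obtain ⟨U, hU⟩ := h
  subst hU
  have hlen : j < (W ++ U).length := by
    rw [List.length_append]; omega
  have h2 := hZ j hlen
  rw [List.getD_eq_getElem _ _ hlen, List.getElem_append_left hj] at h2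
  rw [List.getD_eq_getElem _ _ hj, h2]

lemma pset_mono (T : List ℕ) {W Z : List ℕ} (h : W <+: Z) :
    Pset T Z ⊆ Pset T W := by
  intro p hp
  rw [Pset, Finset.mem_filter] at hp ⊢
  exact ⟨hp.1, circOccAt_of_prefix h hp.2⟩

lemma length_pos {σ : ℕ} {T : List ℕ} (hT : Wellformed σ T) : 0 < T.length := by
  obtain ⟨S, hS, -⟩ := hT
  simp [hS]

lemma getD_mem {T : List ℕ} (hn : 0 < T.length) (m : ℕ) :
    T.getD (m % T.length) 0 ∈ T := by
  rw [List.getD_eq_getElem _ _ (Nat.mod_lt _ hn)]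
  exact List.getElem_mem _

lemma getD_eq_zero_iff {σ : ℕ} {T : List ℕ} (hT : Wellformed σ T) {k : ℕ}
    (hk : k < T.length) : T.getD k 0 = 0 ↔ k = T.length - 1 := by
  obtain ⟨S, hS, hSc⟩ := hT
  subst hS
  have hlen : (S ++ [0]).length = S.length + 1 := by simp
  rw [List.getD_eq_getElem _ _ hk]
  constructor
  · intro h0
    by_contra hne
    have hkS : k < S.length := by simp at hk; omega
    rw [List.getElem_append_left hkS] at h0
    have := hSc (S[k]) (List.getElem_mem _)
    omega
  · intro hk1
    have hkS : k = S.length := by simp at hk ⊢; omega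
    subst hkS
    rw [List.getElem_append_right (le_refl _)]
    simp

lemma getD_last {σ : ℕ} {T : List ℕ} (hT : Wellformed σ T) :
    T.getD (T.length - 1) 0 = 0 :=
  (getD_eq_zero_iff hT (by have := length_pos hT; omega)).mpr rfl

/-- distinct rotations -/
lemma csub_full_inj {σ : ℕ} {T : List ℕ} (hT : Wellformed σ T) {i j : ℕ}
    (hi : i < T.length) (hj : j < T.length)
    (h : csub T i T.length = csub T j T.length) : i = j := by
  set n := T.length with hn
  have hn0 : 0 < n := length_pos hT
  set k := n - 1 - i with hk
  have hik : i + k = n - 1 := by omega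
  have hkn : k < n := by omega
  have h1 : T.getD ((i + k) % n) 0 = T.getD ((j + k) % n) 0 := by
    have h1 := congrFun (congrArg (fun (L : List ℕ) (d : ℕ) => L.getD k d) h) 0
    simpa only [csub_getD T i n k hkn, csub_getD T j n k hkn] using h1
  rw [hik, Nat.mod_eq_of_lt (by omega)] at h1
  rw [getD_last hT] at h1
  have h2 : (j + k) % n = n - 1 :=
    (getD_eq_zero_iff hT (Nat.mod_lt _ hn0)).mp h1.symm
  rcases lt_or_ge (j + k) n with hlt | hge
  · rw [Nat.mod_eq_of_lt hlt] at h2; omega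
  · rw [Nat.mod_eq_sub_mod hge, Nat.mod_eq_of_lt (by omega)] at h2; omega

lemma occ_tail {T : List ℕ} {a : ℕ} {W : List ℕ} {p : ℕ}
    (h : CircOccAt T (a :: W) p) : CircOccAt T W ((p + 1) % T.length) := by
  intro j hj
  have h1 := h (j + 1) (by simp; omega)
  rw [List.getD_cons_succ] at h1
  rw [h1, Nat.mod_add_mod]
  congr 2
  omega

lemma occ_cons {T : List ℕ} {a : ℕ} {Y : List ℕ} {p : ℕ}
    (ha : T.getD (p % T.length) 0 = a)
    (h : CircOccAt T Y ((p + 1) % T.length)) : CircOccAt T (a :: Y) p := by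
  intro j hj
  cases j with
  | zero => simpa using ha.symm
  | succ k =>
    have h1 := h k (by simp at hj; omega)
    rw [List.getD_cons_succ, h1, Nat.mod_add_mod]
    congr 2
    omega

lemma rot_length (T : List ℕ) (p : ℕ) : (rot T p).length = T.length := by
  simp [rot]; omega

lemma rot_getElem {T : List ℕ} {p j : ℕ} (hp : p < T.length) (hj : j < T.length) :
    (rot T p)[j]'(by rw [rot_length]; exact hj) = T.getD ((p + j) % T.length) 0 := by
  set n := T.length with hn
  simp only [rot]
  rcases lt_or_ge j (n - p) with hc | hc
  · rw [List.getElem_append_left (by simp [← hn]; omega)]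
    rw [List.getElem_drop]
    rw [Nat.mod_eq_of_lt (by omega), List.getD_eq_getElem _ _ (by omega)]
  · rw [List.getElem_append_right (by simp [← hn]; omega)]
    have hmod : (p + j) % n = j - (n - p) := by
      rw [Nat.mod_eq_sub_mod (by omega), Nat.mod_eq_of_lt (by omega)]
      omega
    rw [hmod, List.getD_eq_getElem _ _ (by omega)]
    simp only [List.getElem_take, List.length_drop]
    rfl

lemma csub_eq_rot_take {T : List ℕ} {p ℓ : ℕ} (hp : p < T.length)
    (hl : ℓ ≤ T.length) : csub T p ℓ = (rot T p).take ℓ := by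
  apply List.ext_getElem (by rw [csub_length, List.length_take, rot_length]; omega)
  intro j h1 h2
  rw [csub_getElem T p ℓ j (by simpa [csub_length] using h1)]
  rw [List.getElem_take]
  exact (rot_getElem hp (by simp [csub_length] at h1; omega)).symm

end SRME

end

open SRME in
/-- Let `V ∈ ℳ_T ∪ {ε}` and let `b ∈ [0..σ]` with `|𝒫_T(Vb)| > 1`.
Then the shortest right-maximal extension `Y` of `Vb` exists (and is unique),
`𝒫_T(Vb) = 𝒫_T(Y)`, and `Y` is a maximal repeat of `T` iff `Vb` is left-maximal
in `T`. -/
theorem shortest_right_maximal_extension (σ : ℕ) (T : List ℕ) (hT : Wellformed σ T)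
    (V : List ℕ) (hV : V = [] ∨ V ∈ MaxRepeats T) (b : ℕ) (hb : b ≤ σ)
    (hP : 1 < (Pset T (V ++ [b])).card) :
    ∃ Y : List ℕ, ShortestRightMaxExt T (V ++ [b]) Y ∧
      (∀ Y' : List ℕ, ShortestRightMaxExt T (V ++ [b]) Y' → Y' = Y) ∧
      Pset T (V ++ [b]) = Pset T Y ∧
      (Y ∈ MaxRepeats T ↔ LeftMaximal T (V ++ [b])) := by
  classical
  set X := V ++ [b] with hX
  have hn0 : 0 < T.length := length_pos hT
  have hXlen : 1 ≤ X.length := by simp [hX]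
  have hPmem : ∀ p ∈ Pset T X, p < T.length ∧ CircOccAt T X p := by
    intro p hp
    rw [Pset, Finset.mem_filter, Finset.mem_range] at hp
    exact hp
  obtain ⟨i, hi, j, hj, hij⟩ := Finset.one_lt_card.mp hP
  set S : Set ℕ := {ℓ | ∃ p ∈ Pset T X, ∃ q ∈ Pset T X, csub T p ℓ ≠ csub T q ℓ} with hSdef
  have hnS : T.length ∈ S := by
    refine ⟨i, hi, j, hj, ?_⟩
    intro hcontra
    exact hij (csub_full_inj hT (hPmem i hi).1 (hPmem j hj).1 hcontra)
  set L := sInf S with hLdef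
  have hLS : L ∈ S := Nat.sInf_mem ⟨T.length, hnS⟩
  have hLn : L ≤ T.length := Nat.sInf_le hnS
  have hagree : ∀ ℓ < L, ∀ p ∈ Pset T X, ∀ q ∈ Pset T X, csub T p ℓ = csub T q ℓ := by
    intro ℓ hℓ p hp q hq
    by_contra hne
    have := Nat.sInf_le (show ℓ ∈ S from ⟨p, hp, q, hq, hne⟩)
    omega
  have hXcsub : ∀ p ∈ Pset T X, X = csub T p X.length := fun p hp =>
    (circOccAt_iff T X p).mp (hPmem p hp).2
  have hXL : X.length < L := by
    by_contra hle
    push_neg at hle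
    obtain ⟨p, hp, q, hq, hne⟩ := hLS
    have h2 : ∀ r ∈ Pset T X, X.take L = csub T r L := by
      intro r hr
      conv_lhs => rw [hXcsub r hr]
      exact csub_take T r hle
    exact hne ((h2 p hp).symm.trans (h2 q hq))
  set Y := csub T i (L - 1) with hY
  have hYlen : Y.length = L - 1 := csub_length T i (L - 1)
  have hL2 : 2 ≤ L := by omega
  have hXY : X <+: Y := by
    rw [hY]
    conv_lhs => rw [hXcsub i hi]
    exact csub_prefix T i (by omega)
  have hYocc : ∀ p ∈ Pset T X, CircOccAt T Y p := by
    intro p hp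
    rw [circOccAt_iff, hYlen, hY]
    exact hagree (L - 1) (by omega) i hi p hp
  have hPXY : Pset T X = Pset T Y := by
    apply Finset.Subset.antisymm
    · intro p hp
      rw [Pset, Finset.mem_filter]
      exact ⟨Finset.mem_range.mpr (hPmem p hp).1, hYocc p hp⟩
    · exact pset_mono T hXY
  have hYext : ∀ p ∈ Pset T X,
      Y ++ [T.getD ((p + (L - 1)) % T.length) 0] = csub T p L := by
    intro p hp
    have h1 : csub T p L = csub T p (L - 1) ++ [T.getD ((p + (L - 1)) % T.length) 0] := by
      have h2 := csub_succ T p (L - 1)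
      rw [show L - 1 + 1 = L by omega] at h2
      exact h2
    rw [h1]
    congr 1
    rw [hY]
    exact hagree (L - 1) (by omega) i hi p hp
  have hoccY : ∀ p ∈ Pset T X,
      CircOccAt T (Y ++ [T.getD ((p + (L - 1)) % T.length) 0]) p := by
    intro p hp
    rw [circOccAt_iff,
      show (Y ++ [T.getD ((p + (L - 1)) % T.length) 0]).length = L by
        simp [hYlen]; omega]
    exact hYext p hp
  have hRMY : RightMaximal T Y := by
    obtain ⟨p, hp, q, hq, hne⟩ := hLS
    have hcne : T.getD ((p + (L - 1)) % T.length) 0 ≠ T.getD ((q + (L - 1)) % T.length) 0 := by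
      intro hc
      apply hne
      rw [← hYext p hp, ← hYext q hq, hc]
    refine Finset.one_lt_card.mpr ⟨_, ?_, _, ?_, hcne⟩
    · rw [SigmaR, Finset.mem_filter]
      exact ⟨List.mem_toFinset.mpr (getD_mem hn0 _),
        ⟨p, Finset.mem_filter.mpr ⟨Finset.mem_range.mpr (hPmem p hp).1, hoccY p hp⟩⟩⟩
    · rw [SigmaR, Finset.mem_filter]
      exact ⟨List.mem_toFinset.mpr (getD_mem hn0 _),
        ⟨q, Finset.mem_filter.mpr ⟨Finset.mem_range.mpr (hPmem q hq).1, hoccY q hq⟩⟩⟩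
  have hZfacts : ∀ Z : List ℕ, X <+: Z → RightMaximal T Z →
      L - 1 ≤ Z.length ∧ ∃ p ∈ Pset T X, CircOccAt T Z p := by
    intro Z hXZ hRZ
    obtain ⟨c, hc, d, hd, hcd⟩ := Finset.one_lt_card.mp hRZ
    rw [SigmaR, Finset.mem_filter] at hc hd
    obtain ⟨p, hpmem⟩ := hc.2
    obtain ⟨q, hqmem⟩ := hd.2
    have hpX : p ∈ Pset T X := pset_mono T (hXZ.trans (List.prefix_append Z [c])) hpmem
    have hqX : q ∈ Pset T X := pset_mono T (hXZ.trans (List.prefix_append Z [d])) hqmem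
    have hpZc : Z ++ [c] = csub T p (Z.length + 1) := by
      have h1 := (circOccAt_iff T (Z ++ [c]) p).mp (Finset.mem_filter.mp hpmem).2
      simpa using h1
    have hqZd : Z ++ [d] = csub T q (Z.length + 1) := by
      have h1 := (circOccAt_iff T (Z ++ [d]) q).mp (Finset.mem_filter.mp hqmem).2
      simpa using h1
    have hlen : L - 1 ≤ Z.length := by
      by_contra hlt
      push_neg at hlt
      have hSmem : Z.length + 1 ∈ S := by
        refine ⟨p, hpX, q, hqX, ?_⟩
        rw [← hpZc, ← hqZd]
        intro h
        exact hcd (by simpa using h)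
      have := Nat.sInf_le hSmem
      omega
    exact ⟨hlen, p, hpX,
      circOccAt_of_prefix (List.prefix_append Z [c]) (Finset.mem_filter.mp hpmem).2⟩
  have hmin : ∀ Z : List ℕ, X <+: Z → RightMaximal T Z → Y.length ≤ Z.length := by
    intro Z hXZ hRZ
    have := (hZfacts Z hXZ hRZ).1
    omega
  have hSigmaL : SigmaL T Y = SigmaL T X := by
    apply Finset.ext
    intro a
    simp only [SigmaL, Finset.mem_filter, and_congr_right_iff]
    intro ha
    constructor
    · rintro ⟨p, hp⟩
      have hp' := Finset.mem_filter.mp hp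
      refine ⟨p, Finset.mem_filter.mpr ⟨hp'.1, ?_⟩⟩
      exact circOccAt_of_prefix (List.cons_prefix_cons.mpr ⟨rfl, hXY⟩) hp'.2
    · rintro ⟨p, hp⟩
      have hp' := Finset.mem_filter.mp hp
      have hXp1 : CircOccAt T X ((p + 1) % T.length) := occ_tail hp'.2
      have hmem : (p + 1) % T.length ∈ Pset T X :=
        Finset.mem_filter.mpr ⟨Finset.mem_range.mpr (Nat.mod_lt _ hn0), hXp1⟩
      have hYp1 : CircOccAt T Y ((p + 1) % T.length) := hYocc _ hmem
      have ha' : T.getD (p % T.length) 0 = a := by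
        have h0 := hp'.2 0 (by simp)
        simpa using h0.symm
      exact ⟨p, Finset.mem_filter.mpr ⟨hp'.1, occ_cons ha' hYp1⟩⟩
  refine ⟨Y, ⟨hXY, hRMY, hmin⟩, ?_, hPXY, ?_⟩
  · intro Y' hY'
    obtain ⟨hXY', hRY', hminY'⟩ := hY'
    have h1 : Y'.length ≤ L - 1 := by
      have := hminY' Y hXY hRMY
      omega
    obtain ⟨hge, p, hpX, hocc⟩ := hZfacts Y' hXY' hRY'
    have hlen' : Y'.length = L - 1 := by omega
    have h2 := (circOccAt_iff T Y' p).mp hocc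
    rw [hlen'] at h2
    rw [h2, hY]
    exact hagree (L - 1) (by omega) p hpX i hi
  · constructor
    · intro hmax
      have hlmY : LeftMaximal T Y := (Finset.mem_filter.mp hmax).2.2.2.1
      show 1 < (SigmaL T X).card
      rw [← hSigmaL]
      exact hlmY
    · intro hlm
      rw [MaxRepeats, Finset.mem_filter]
      refine ⟨?_, ?_, ?_, ?_, hRMY⟩
      · rw [circSubstrings, Finset.mem_image]
        refine ⟨(i, L - 1), ?_, ?_⟩
        · rw [Finset.mem_product]
          exact ⟨Finset.mem_range.mpr (hPmem i hi).1, Finset.mem_range.mpr (by omega)⟩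
        · rw [hY]
          exact (csub_eq_rot_take (hPmem i hi).1 (by omega)).symm
      · intro h0
        have : Y.length = 0 := by rw [h0]; rfl
        omega
      · rw [← hPXY]
        exact hP
      · show 1 < (SigmaL T Y).card
        rw [hSigmaL]
        exact hlm
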